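/- Let k be a field, R a positively graded finitely generated k-algebra of dimension n, and x₁,...,xₙ homogeneous elements such that R is a finite module over k[x₁,...,xₙ]. Then x₁,...,xₙ are algebraically independent over k. -/

import Mathlib

open MvPolynomial

section HsopAux


lemma polyKill {B S : Type*} [CommRing B] [CommRing S] (f : B →+* S)
    (q0 q1 : Ideal S) (hq0 : q0.IsPrime) (h01 : q0 ≤ q1) (z : S)
    (hz1 : z ∈ q1) (hz0 : z ∉ q0) :
    ∀ (p : Polynomial B), p ≠ 0 → Polynomial.eval₂ f z p ∈ q0 →
      ∃ b : B, b ≠ 0 ∧ f b ∈ q1 := by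
  have key : ∀ (N : ℕ) (p : Polynomial B), p.natDegree ≤ N → p ≠ 0 →
      Polynomial.eval₂ f z p ∈ q0 → ∃ b : B, b ≠ 0 ∧ f b ∈ q1 := by
    intro N
    induction N with
    | zero =>
      intro p hdeg hp he
      have hpc : p = Polynomial.C (p.coeff 0) := Polynomial.eq_C_of_natDegree_eq_zero
        (Nat.le_zero.mp hdeg)
      refine ⟨p.coeff 0, fun h => hp (by rw [hpc, h, map_zero]), ?_⟩
      rw [hpc, Polynomial.eval₂_C] at he
      exact h01 he
    | succ N ih =>
      intro p hdeg hp he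
      have h2 := congrArg (Polynomial.eval₂ f z) (Polynomial.divX_mul_X_add p)
      rw [Polynomial.eval₂_add, Polynomial.eval₂_mul, Polynomial.eval₂_X,
        Polynomial.eval₂_C] at h2
      by_cases hc : p.coeff 0 = 0
      · have hdvx : p.divX ≠ 0 := by
          intro h
          apply hp
          rw [← Polynomial.divX_mul_X_add p, h, hc]
          simp
        have hEq : Polynomial.eval₂ f z p = Polynomial.eval₂ f z p.divX * z := by
          rw [← h2, hc]
          simp [mul_comm]
        rw [hEq] at he
        have hmem : Polynomial.eval₂ f z p.divX ∈ q0 := by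
          rcases hq0.mem_or_mem he with h | h
          · exact h
          · exact absurd h hz0
        exact ih p.divX (by
          have := Polynomial.natDegree_divX_eq_natDegree_tsub_one (p := p)
          omega) hdvx hmem
      · refine ⟨p.coeff 0, hc, ?_⟩
        have hEq : f (p.coeff 0) =
            Polynomial.eval₂ f z p - Polynomial.eval₂ f z p.divX * z := by
          rw [← h2]; ring
        rw [hEq]
        exact Submodule.sub_mem _ (h01 he) (Ideal.mul_mem_left _ _ hz1)
  intro p hp he
  exact key p.natDegree p le_rfl hp he

lemma aeval_finSuccEquiv' {k S : Type*} [CommSemiring k] [CommRing S] [Algebra k S]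
    (m : ℕ) (Q : MvPolynomial (Fin (m + 1)) k) (y : Fin (m + 1) → S) :
    aeval y Q = Polynomial.eval₂
      ((aeval (fun j : Fin m => y j.succ) : MvPolynomial (Fin m) k →ₐ[k] S) : MvPolynomial (Fin m) k →+* S)
      (y 0) (finSuccEquiv k m Q) := by
  have : ((aeval y : MvPolynomial (Fin (m+1)) k →ₐ[k] S) : MvPolynomial (Fin (m+1)) k →+* S) =
      (Polynomial.eval₂RingHom
        ((aeval (fun j : Fin m => y j.succ) : MvPolynomial (Fin m) k →ₐ[k] S) : MvPolynomial (Fin m) k →+* S)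
        (y 0)).comp
        ((finSuccEquiv k m : MvPolynomial (Fin (m+1)) k ≃ₐ[k] _) : MvPolynomial (Fin (m+1)) k →+* _) := by
    apply MvPolynomial.ringHom_ext
    · intro r
      simp [MvPolynomial.finSuccEquiv_apply]
    · intro i
      refine Fin.cases ?_ ?_ i
      · simp [MvPolynomial.finSuccEquiv_X_zero]
      · intro j
        simp [MvPolynomial.finSuccEquiv_X_succ]
  have h := congrFun (congrArg (fun (g : MvPolynomial (Fin (m+1)) k →+* S) => ⇑g) this) Q
  simpa using h






/-- A nonzero polynomial relation over a field, evaluated along a chain of primes,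
yields a contradiction. -/
lemma chainKill {k S : Type*} [Field k] [CommRing S] [Algebra k S] :
    ∀ (m : ℕ) (Q : MvPolynomial (Fin m) k), Q ≠ 0 →
    ∀ (q : Fin (m + 1) → Ideal S), (∀ i, (q i).IsPrime) → Monotone q →
    ∀ (y : Fin m → S), (∀ i : Fin m, y i ∈ q i.succ) → (∀ i : Fin m, y i ∉ q i.castSucc) →
    aeval y Q ∈ q 0 → False := by
  intro m
  induction m with
  | zero =>
    intro Q hQ q hprime _ y _ _ hmem
    obtain ⟨c, rfl⟩ := MvPolynomial.C_surjective (Fin 0) Q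
    have hc : c ≠ 0 := fun h => hQ (by rw [h, map_zero])
    rw [aeval_C] at hmem
    exact (hprime 0).ne_top (Ideal.eq_top_of_isUnit_mem _ hmem
      ((isUnit_iff_ne_zero.mpr hc).map (algebraMap k S)))
  | succ m ih =>
    intro Q hQ q hprime hmono y hy hy' hmem
    set p := finSuccEquiv k m Q with hp
    have hpne : p ≠ 0 := fun h => hQ ((map_eq_zero_iff _ (finSuccEquiv k m).injective).mp h)
    rw [aeval_finSuccEquiv' m Q y] at hmem
    obtain ⟨b, hb, hbmem⟩ := polyKill _ (q 0) (q 1) (hprime 0)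
      (hmono (by norm_num : (0 : Fin (m+2)) ≤ 1)) (y 0)
      (by simpa using hy 0) (by simpa using hy' 0) p hpne hmem
    refine ih b hb (q ∘ Fin.succ) (fun i => hprime _)
      (hmono.comp (Fin.strictMono_succ).monotone)
      (fun j => y j.succ) (fun j => ?_) (fun j => ?_) ?_
    · have := hy j.succ
      simpa [Function.comp] using this
    · have := hy' j.succ
      simpa only [Function.comp_apply, Fin.succ_castSucc] using this
    · simpa using hbmem


lemma not_algIndep_succ {k : Type*} [Field k] (n : ℕ)
    (y : Fin (n + 1) → MvPolynomial (Fin n) k) : ¬ AlgebraicIndependent k y := by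
  classical
  intro h
  have hinj : Function.Injective (aeval y : MvPolynomial (Fin (n+1)) k →ₐ[k] MvPolynomial (Fin n) k) :=
    algebraicIndependent_iff_injective_aeval.mp h
  set d := Finset.univ.sup (fun i => (y i).totalDegree) with hd
  set c := (n + 1) * d + 1 with hc
  set M := c ^ n with hM
  have hM1 : 1 ≤ M := Nat.one_le_pow _ _ (by omega)
  set D := (n + 1) * M * d with hD
  -- linear independence of monomial products
  have li : LinearIndependent k (fun s : Fin (n+1) →₀ ℕ => aeval y (monomial s (1:k))) := by
    have hb := (MvPolynomial.basisMonomials (Fin (n+1)) k).linearIndependent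
    have := hb.map' (aeval y).toLinearMap (LinearMap.ker_eq_bot.mpr (show Function.Injective ⇑(aeval y).toLinearMap from hinj))
    simpa [MvPolynomial.coe_basisMonomials, Function.comp_def] using this
  -- index embedding
  set e : (Fin (n+1) → Fin (M+1)) → (Fin (n+1) →₀ ℕ) :=
    fun f => Finsupp.equivFunOnFinite.symm (fun i => (f i : ℕ)) with he
  have einj : Function.Injective e := by
    intro f g hfg
    funext i
    have := congrArg (fun s => Finsupp.equivFunOnFinite s i) hfg
    simpa [he, Fin.val_injective.eq_iff] using this
  have li2 : LinearIndependent k (fun f : Fin (n+1) → Fin (M+1) =>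
      aeval y (monomial (e f) (1:k))) := li.comp e einj
  -- the spanning set
  set w : (Fin n → Fin (D+1)) → MvPolynomial (Fin n) k :=
    fun g => monomial (Finsupp.equivFunOnFinite.symm (fun i => (g i : ℕ))) (1:k) with hw
  set V : Submodule k (MvPolynomial (Fin n) k) := Submodule.span k (Set.range w) with hV
  haveI : Module.Finite k V := Module.Finite.span_of_finite k (Set.finite_range w)
  -- membership of small-degree polynomials in V
  have hmemV : ∀ z : MvPolynomial (Fin n) k, z.totalDegree ≤ D → z ∈ V := by
    intro z hz
    rw [z.as_sum]
    refine Submodule.sum_mem _ (fun t ht => ?_)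
    have hts : (t.sum fun _ e => e) ≤ D := le_trans (le_totalDegree ht) hz
    have hti : ∀ i, t i ≤ D := by
      intro i
      by_cases h0 : t i = 0
      · omega
      · refine le_trans ?_ hts
        rw [Finsupp.sum]
        exact Finset.single_le_sum (fun _ _ => Nat.zero_le _)
          (Finsupp.mem_support_iff.mpr h0)
    set g : Fin n → Fin (D+1) := fun i => ⟨t i, Nat.lt_succ_of_le (hti i)⟩ with hg
    have htg : t = Finsupp.equivFunOnFinite.symm (fun i => ((g i : ℕ))) := by
      ext i
      simp [hg]
    have : monomial t (coeff t z) = (coeff t z) • monomial t (1:k) := by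
      rw [MvPolynomial.smul_monomial, smul_eq_mul, mul_one]
    rw [this]
    exact Submodule.smul_mem _ _ (Submodule.subset_span ⟨g, by simpa [hw] using congrArg (fun s => (monomial s (1:k))) htg.symm⟩)
  -- total degree bound for the products
  have hdeg : ∀ f : Fin (n+1) → Fin (M+1), (aeval y (monomial (e f) (1:k))).totalDegree ≤ D := by
    intro f
    rw [aeval_monomial, map_one, one_mul]
    have : ((e f).prod fun i k => y i ^ k) = ∏ i, y i ^ (e f) i := Finsupp.prod_pow _ _
    rw [this]
    refine le_trans (totalDegree_finset_prod _ _) ?_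
    refine le_trans (Finset.sum_le_sum (fun i _ => totalDegree_pow (y i) _)) ?_
    have step : ∀ i : Fin (n+1), (e f) i * (y i).totalDegree ≤ M * d := by
      intro i
      have h1 : (e f) i ≤ M := by
        have : (f i : ℕ) < M + 1 := (f i).isLt
        simp only [he, Finsupp.equivFunOnFinite_symm_apply_apply]
        omega
      have h2 : (y i).totalDegree ≤ d := Finset.le_sup (f := fun i => (y i).totalDegree) (Finset.mem_univ i)
      exact Nat.mul_le_mul h1 h2
    refine le_trans (Finset.sum_le_sum (fun i _ => step i)) ?_
    rw [Finset.sum_const, Finset.card_univ, Fintype.card_fin, smul_eq_mul, hD]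
    ring_nf
    omega
  -- restrict family into V
  set v : (Fin (n+1) → Fin (M+1)) → V :=
    fun f => ⟨aeval y (monomial (e f) (1:k)), hmemV _ (hdeg f)⟩ with hv
  have li3 : LinearIndependent k v := by
    apply LinearIndependent.of_comp V.subtype
    convert li2
    rfl
  have hcard1 : (M+1) ^ (n+1) ≤ Module.finrank k V := by
    have := li3.fintype_card_le_finrank
    simpa [Fintype.card_fun] using this
  have hcard2 : Module.finrank k V ≤ (D+1) ^ n := by
    refine le_trans (finrank_span_le_card (Set.range w)) ?_
    rw [Set.toFinset_range]
    refine le_trans (Finset.card_image_le) ?_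
    simp [Fintype.card_fun]
  -- arithmetic contradiction
  have harith : (D + 1) ^ n ≤ M ^ (n + 1) := by
    have h1 : D + 1 ≤ c * M := by
      rw [hD, hc]
      nlinarith [hM1]
    calc (D+1)^n ≤ (c*M)^n := Nat.pow_le_pow_left h1 n
      _ = c^n * M^n := mul_pow _ _ _
      _ = M * M^n := by rw [hM]
      _ = M^(n+1) := by ring
  have hlt : M ^ (n+1) < (M+1) ^ (n+1) :=
    Nat.pow_lt_pow_left (by omega) (by omega)
  exact absurd (le_trans hcard1 (le_trans hcard2 harith)) (not_le.mpr hlt)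


end HsopAux


/-- If `R` is a positively graded affine `k`-algebra of dimension `n` with
`R₀ = k`, and `R` is a finite module over `k[x₁, …, xₙ]` for homogeneous
elements `x₁, …, xₙ`, then the `xᵢ` are algebraically independent over `k`. -/
theorem hsop_algebraicIndependent (k R : Type*) [Field k] [CommRing R]
    [Algebra k R] (𝒜 : ℕ → Submodule k R) [GradedAlgebra 𝒜]
    (hfg : Algebra.FiniteType k R) (h0 : 𝒜 0 = 1)
    (n : ℕ) (hdim : ringKrullDim R = n)
    (x : Fin n → R) (hx : ∀ i, ∃ d : ℕ, x i ∈ 𝒜 d)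
    (hfin : Module.Finite (Algebra.adjoin k (Set.range x)) R) :
    AlgebraicIndependent k x := by
  classical
  by_contra hdep
  -- a nonzero element of the kernel of aeval x
  rw [algebraicIndependent_iff_injective_aeval] at hdep
  obtain ⟨a, b, hab, hne⟩ := Function.not_injective_iff.mp hdep
  set f0 : MvPolynomial (Fin n) k := a - b with hf0
  have hf0ne : f0 ≠ 0 := sub_ne_zero_of_ne hne
  have hf0ker : aeval x f0 = 0 := by rw [hf0, map_sub, hab, sub_self]
  -- R is nontrivial
  have hnontriv : Nontrivial R := by
    by_contra h
    rw [not_nontrivial_iff_subsingleton] at h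
    rw [@ringKrullDim_eq_bot_of_subsingleton R _ h] at hdim
    simp at hdim
  -- a chain of primes of length n in R
  obtain ⟨σ0, hσ0⟩ : ∃ σ : LTSeries (PrimeSpectrum R), n ≤ σ.length := by
    rcases Nat.eq_zero_or_pos n with hn | hn
    · exact ⟨RelSeries.singleton _ (Classical.arbitrary _), by omega⟩
    · by_contra hcon
      push_neg at hcon
      have heq : Order.krullDim (PrimeSpectrum R) = (n : WithBot (WithTop ℕ)) := hdim
      rw [Order.krullDim_eq_iSup_length] at heq
      have hle : (⨆ p : LTSeries (PrimeSpectrum R), (p.length : ℕ∞)) ≤ ((n - 1 : ℕ) : ℕ∞) :=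
        iSup_le fun p => by exact_mod_cast Nat.le_sub_one_of_lt (hcon p)
      have heq2 : (⨆ p : LTSeries (PrimeSpectrum R), (p.length : ℕ∞)) = (n : ℕ∞) := by
        exact WithBot.coe_injective (heq.trans (WithBot.coe_natCast n).symm)
      rw [heq2] at hle
      have : (n : ℕ∞) ≤ ((n - 1 : ℕ) : ℕ∞) := hle
      have : n ≤ n - 1 := by exact_mod_cast this
      omega
  set chain : Fin (n + 1) → PrimeSpectrum R :=
    fun i => σ0 (Fin.castLE (by omega) i) with hchaindef
  have hchain : StrictMono chain := by
    intro i j hij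
    apply σ0.strictMono
    rw [Fin.lt_def] at hij ⊢
    simpa using hij
  -- the subalgebra A
  set A := Algebra.adjoin k (Set.range x) with hA
  haveI : Module.Finite A R := hfin
  haveI : Algebra.IsIntegral A R := Algebra.IsIntegral.of_finite A R
  -- the surjection from the polynomial ring onto A
  have hmem : ∀ p : MvPolynomial (Fin n) k, aeval x p ∈ A := by
    intro p
    rw [hA, Algebra.adjoin_range_eq_range_aeval]
    exact ⟨p, rfl⟩
  set φ : MvPolynomial (Fin n) k →ₐ[k] A := (aeval x).codRestrict A hmem with hφ
  have hsurj : Function.Surjective φ := by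
    intro a
    have : (a : R) ∈ Algebra.adjoin k (Set.range x) := a.2
    rw [Algebra.adjoin_range_eq_range_aeval] at this
    obtain ⟨p, hp⟩ := this
    exact ⟨p, Subtype.ext hp⟩
  have hφ0 : φ f0 = 0 := by
    apply Subtype.ext
    show aeval x f0 = (0 : R)
    exact hf0ker
  -- the chain in the polynomial ring
  set r : Fin (n + 1) → Ideal (MvPolynomial (Fin n) k) :=
    fun i => Ideal.comap (φ : MvPolynomial (Fin n) k →+* A)
      (Ideal.comap (algebraMap A R) (chain i).asIdeal) with hr
  have hrprime : ∀ i, (r i).IsPrime := fun i => Ideal.IsPrime.comap _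
  have hrs : StrictMono r := by
    intro i j hij
    have h1 : (chain i).asIdeal < (chain j).asIdeal :=
      (PrimeSpectrum.asIdeal_lt_asIdeal _ _).mpr (hchain hij)
    obtain ⟨t, htj, hti⟩ := SetLike.exists_of_lt h1
    have h2 : Ideal.comap (algebraMap A R) (chain i).asIdeal <
        Ideal.comap (algebraMap A R) (chain j).asIdeal :=
      Ideal.comap_lt_comap_of_integral_mem_sdiff h1.le ⟨htj, hti⟩
        (Algebra.IsIntegral.isIntegral t)
    refine lt_of_le_of_ne (Ideal.comap_mono h2.le) ?_
    intro heq
    apply h2.ne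
    have hsurj' : Function.Surjective ⇑(φ : MvPolynomial (Fin n) k →+* A) := hsurj
    have := congrArg (Ideal.map (φ : MvPolynomial (Fin n) k →+* A)) heq
    rwa [Ideal.map_comap_of_surjective _ hsurj', Ideal.map_comap_of_surjective _ hsurj'] at this
  have hf0r : f0 ∈ r 0 := by
    have h00 : (φ : MvPolynomial (Fin n) k →+* A) f0 = 0 := hφ0
    rw [hr]
    exact Ideal.mem_comap.mpr (by rw [h00]; exact Submodule.zero_mem _)
  -- prepend ⊥
  set c : Fin (n + 2) → Ideal (MvPolynomial (Fin n) k) := Fin.cases ⊥ r with hcdef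
  have hc0 : c 0 = ⊥ := rfl
  have hcsucc : ∀ i : Fin (n + 1), c i.succ = r i := fun i => by
    rw [hcdef]; exact Fin.cases_succ i
  have hclt : ∀ i : Fin (n + 1), c i.castSucc < c i.succ := by
    intro i
    refine Fin.cases ?_ ?_ i
    · rw [hcsucc, Fin.castSucc_zero, hc0]
      refine bot_lt_iff_ne_bot.mpr ?_
      exact (Submodule.ne_bot_iff _).mpr ⟨f0, hf0r, hf0ne⟩
    · intro j
      rw [hcsucc, ← Fin.succ_castSucc, hcsucc]
      exact hrs (Fin.castSucc_lt_succ (i := j))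
  have hcprime : ∀ i, (c i).IsPrime := by
    intro i
    refine Fin.cases ?_ ?_ i
    · rw [hc0]; exact Ideal.bot_prime
    · intro j; rw [hcsucc]; exact hrprime j
  have hcmono : Monotone c :=
    (Fin.strictMono_iff_lt_succ.mpr hclt).monotone
  -- choose elements in the gaps
  have hysel : ∀ i : Fin (n + 1), ∃ z, z ∈ c i.succ ∧ z ∉ c i.castSucc := by
    intro i
    obtain ⟨z, h1, h2⟩ := SetLike.exists_of_lt (hclt i)
    exact ⟨z, h1, h2⟩
  choose y hy1 hy2 using hysel
  -- y is algebraically dependent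
  have hYdep := not_algIndep_succ n y
  rw [algebraicIndependent_iff_injective_aeval] at hYdep
  obtain ⟨a', b', hab', hne'⟩ := Function.not_injective_iff.mp hYdep
  refine chainKill (n + 1) (a' - b') (sub_ne_zero_of_ne hne') c hcprime hcmono y hy1 hy2 ?_
  rw [map_sub, hab', sub_self]
  exact Submodule.zero_mem _
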